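/- Let (A,+) be a cancellative monoid with identity 0, and let X, Y ⊆ A be such that ⟨Y⟩ is commutative and X ∪ (X + Y) ≠ X + ⟨⟨Y⟩⟩. Then |X ∪ (X + Y)| ≥ |X| + min(γ(Y ∪ {0}), |Y| − 1_Y(0)), where 1_Y(0) = 1 if 0 ∈ Y and 0 otherwise. -/

import Mathlib

open scoped Pointwise Classical
open AddSubsemigroup

namespace CD

variable {A : Type*} [AddSemigroup A]

/-- An element `z` is cancellable if both translation maps are injective. -/
def Cancellable (z : A) : Prop :=
  Function.Injective (fun x : A => x + z) ∧ Function.Injective (fun x : A => z + x)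

/-- `e` is a two-sided identity of the semigroup. -/
def IsIdentity (e : A) : Prop := ∀ x : A, x + e = x ∧ e + x = x

/-- `u` is a unit: there is a two-sided identity and a two-sided inverse of `u`. -/
def IsUnitElem (u : A) : Prop := ∃ e v : A, IsIdentity e ∧ u + v = e ∧ v + u = e

/-- The inverse of a unit (junk value otherwise). -/
noncomputable def neg (u : A) : A :=
  if h : IsUnitElem u then h.choose_spec.choose else u

/-- `ord a` is the cardinality of the subsemigroup generated by `a`. -/
noncomputable def ord (a : A) : ℕ∞ := (closure {a} : Set A).encard

/-- The units of `A` lying in `W`. -/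
def unitsIn (W : Set A) : Set A := {w ∈ W | IsUnitElem w}

/-- A set is commutative if its elements pairwise commute. -/
def CommOn (S : Set A) : Prop := ∀ a ∈ S, ∀ b ∈ S, a + b = b + a

/-- The Cauchy-Davenport constant of a set. -/
noncomputable def gamma (X : Set A) : ℕ∞ :=
  if X.encard ≤ 1 then X.encard
  else ⨆ x₀ ∈ unitsIn X, ⨅ x ∈ {x ∈ X | x ≠ x₀}, ord (x + neg x₀)

/-- The sumset `X 0 + X 1 + ⋯ + X n` of a tuple of sets. -/
def sumsetTup : (n : ℕ) → (Fin (n + 1) → Set A) → Set A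
  | 0, X => X 0
  | n + 1, X => sumsetTup n (fun i => X i.castSucc) + X (Fin.last (n + 1))

/-- The sum `x 0 + x 1 + ⋯ + x n` of a tuple of elements. -/
def sumTup : (n : ℕ) → (Fin (n + 1) → A) → A
  | 0, x => x 0
  | n + 1, x => sumTup n (fun i => x i.castSucc) + x (Fin.last (n + 1))

/-- `nfold n a` is the `(n+1)`-fold sum `a + a + ⋯ + a`. -/
def nfold : ℕ → A → A
  | 0, a => a
  | n + 1, a => nfold n a + a

/-- `⟨⟨W⟩⟩`, the subsemigroup generated by `W` together with the inverses of its units. -/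
noncomputable def dclosure (W : Set A) : Set A :=
  (closure (W ∪ neg '' unitsIn W) : Set A)

/-- `Ỹ_z = {y ∈ Y : z ∈ X + Y + y}`. -/
noncomputable def Ytil (X Y : Set A) (z : A) : Set A := {y ∈ Y | z ∈ X + Y + {y}}

/-- `z − W = {w : z ∈ w + W}`. -/
def subFrom (z : A) (W : Set A) : Set A := {w : A | ∃ u ∈ W, w + u = z}

end CD

open CD

section Helpers

variable {A : Type*} [AddMonoid A] [IsCancelAdd A]

lemma my_isIdentity_eq_zero {e : A} (h : IsIdentity e) : e = 0 := by
  have h1 := (h 0).1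
  rwa [zero_add] at h1

lemma my_unit_iff {u : A} : IsUnitElem u ↔ ∃ v, u + v = 0 ∧ v + u = 0 := by
  constructor
  · rintro ⟨e, v, hid, h1, h2⟩
    obtain rfl := my_isIdentity_eq_zero hid
    exact ⟨v, h1, h2⟩
  · rintro ⟨v, h1, h2⟩
    exact ⟨0, v, fun x => ⟨add_zero x, zero_add x⟩, h1, h2⟩

lemma my_neg_spec {u : A} (hu : IsUnitElem u) : u + neg u = 0 ∧ neg u + u = 0 := by
  have hval : neg u = hu.choose_spec.choose := by rw [neg, dif_pos hu]
  obtain ⟨hid, h1, h2⟩ := hu.choose_spec.choose_spec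
  obtain he := my_isIdentity_eq_zero hid
  rw [hval]
  exact ⟨he ▸ h1, he ▸ h2⟩

lemma my_neg_eq {u b : A} (hu : IsUnitElem u) (h1 : u + b = 0) (h2 : b + u = 0) :
    neg u = b := by
  obtain ⟨h3, h4⟩ := my_neg_spec hu
  calc neg u = neg u + (u + b) := by rw [h1, add_zero]
    _ = (neg u + u) + b := by rw [add_assoc]
    _ = b := by rw [h4, zero_add]

lemma my_unit_zero : IsUnitElem (0 : A) :=
  my_unit_iff.2 ⟨0, add_zero 0, add_zero 0⟩

lemma my_unit_add {a b : A} (ha : IsUnitElem a) (hb : IsUnitElem b) :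
    IsUnitElem (a + b) := by
  obtain ⟨ha1, ha2⟩ := my_neg_spec ha
  obtain ⟨hb1, hb2⟩ := my_neg_spec hb
  refine my_unit_iff.2 ⟨neg b + neg a, ?_, ?_⟩
  · calc a + b + (neg b + neg a) = a + (b + neg b) + neg a := by simp [add_assoc]
      _ = 0 := by rw [hb1, add_zero, ha1]
  · calc neg b + neg a + (a + b) = neg b + (neg a + a) + b := by simp [add_assoc]
      _ = 0 := by rw [ha2, add_zero, hb2]

lemma my_commOn_closure {S : Set A} (h : CommOn S) : CommOn (closure S : Set A) := by
  have h1 : ∀ a ∈ (closure S : Set A), ∀ b ∈ S, a + b = b + a := by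
    intro a ha
    induction ha using closure_induction with
    | mem x hx => exact fun b hb => h x hx b hb
    | add x y hx hy ihx ihy =>
        intro b hb
        rw [add_assoc, ihy b hb, ← add_assoc, ihx b hb, add_assoc]
  intro a ha b hb
  induction hb using closure_induction with
  | mem x hx => exact h1 a ha x hx
  | add x y hx hy ihx ihy =>
      rw [← add_assoc, ihx, add_assoc, ihy, ← add_assoc]

lemma my_absorb {X Y : Set A} (hcl : ∀ y ∈ Y, X + Y + ({y} : Set A) ⊆ X + Y)
    {s : A} (hs : s ∈ closure Y) : ∀ p ∈ X + Y, p + s ∈ X + Y := by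
  induction hs using closure_induction with
  | mem y hy => exact fun p hp => hcl y hy (Set.add_mem_add hp rfl)
  | add x y hx hy ihx ihy =>
      intro p hp
      rw [← add_assoc]
      exact ihy _ (ihx p hp)

lemma my_grp {T : Set A} (hfin : T.Finite) (hcl : ∀ a ∈ T, ∀ b ∈ T, a + b ∈ T)
    {a : A} (ha : a ∈ T) : 0 ∈ T ∧ ∃ b ∈ T, b + a = 0 := by
  have himg : (fun t => t + a) '' T = T := by
    apply Set.eq_of_subset_of_ncard_le
    · rintro _ ⟨t, ht, rfl⟩
      exact hcl t ht a ha
    · rw [Set.ncard_image_of_injOn ((add_left_injective a).injOn)]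
    · exact hfin
  have h0 : (0 : A) ∈ T := by
    have : a ∈ (fun t => t + a) '' T := himg.symm ▸ ha
    obtain ⟨t, ht, hta⟩ := this
    have hta' : t + a = a := hta
    have : t + a = 0 + a := by rw [hta', zero_add]
    exact add_right_cancel this ▸ ht
  have : (0 : A) ∈ (fun t => t + a) '' T := himg.symm ▸ h0
  obtain ⟨b, hb, hba⟩ := this
  exact ⟨h0, b, hb, hba⟩

/-- Saturation: if `X+Y` absorbs every `y ∈ Y`, then `X+Y = X + ⟨Y⟩ = X + ⟨⟨Y⟩⟩`. -/
lemma my_sat {X Y : Set A} (hXne : X.Nonempty) (hfin : (X + Y).Finite)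
    (h0 : (0 : A) ∈ Y) (hcomm : CommOn (closure Y : Set A))
    (hcl : ∀ y ∈ Y, X + Y + ({y} : Set A) ⊆ X + Y) :
    X + Y = X + (closure Y : Set A) ∧ dclosure Y = (closure Y : Set A) ∧
      (closure Y : Set A).Finite := by
  have hXc : X + (closure Y : Set A) ⊆ X + Y := by
    rintro _ ⟨x, hx, s, hs, rfl⟩
    have hx' : x ∈ X + Y := by
      have := Set.add_mem_add hx h0
      rwa [add_zero] at this
    exact my_absorb hcl hs x hx'
  have h1 : X + Y = X + (closure Y : Set A) :=
    (Set.add_subset_add_left AddSubsemigroup.subset_closure).antisymm hXc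
  obtain ⟨x₀, hx₀⟩ := hXne
  have hGfin : (closure Y : Set A).Finite := by
    apply Set.Finite.of_finite_image (f := fun s => x₀ + s) ?_ ((add_right_injective x₀).injOn)
    apply hfin.subset
    rintro _ ⟨s, hs, rfl⟩
    exact hXc (Set.add_mem_add hx₀ hs)
  have hGcl : ∀ a ∈ (closure Y : Set A), ∀ b ∈ (closure Y : Set A), a + b ∈ (closure Y : Set A) :=
    fun a ha b hb => add_mem ha hb
  have key : ∀ u ∈ unitsIn Y, neg u ∈ (closure Y : Set A) := by
    rintro u ⟨huY, huU⟩
    obtain ⟨h0G, b, hbG, hba⟩ := my_grp hGfin hGcl (AddSubsemigroup.subset_closure huY)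
    have hab : u + b = 0 := by
      rw [hcomm u (AddSubsemigroup.subset_closure huY) b hbG]; exact hba
    rw [my_neg_eq huU hab hba]
    exact hbG
  have h2 : dclosure Y = (closure Y : Set A) := by
    apply subset_antisymm
    · refine SetLike.coe_subset_coe.mpr (closure_le.2 (Set.union_subset AddSubsemigroup.subset_closure ?_))
      rintro _ ⟨u, hu, rfl⟩
      exact key u hu
    · exact SetLike.coe_subset_coe.mpr (closure_mono Set.subset_union_left)
  exact ⟨h1, h2, hGfin⟩

end Helpers

section Core

variable {A : Type*} [AddMonoid A] [IsCancelAdd A]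

/-- Core Cauchy–Davenport lemma, proved by induction via the Davenport transform. -/
lemma my_core (n : ℕ) : ∀ X Y : Set A, X.Finite → X.Nonempty → Y.Finite →
    Y.ncard ≤ n → (0 : A) ∈ Y → CommOn (closure Y : Set A) →
    X + Y ≠ X + dclosure Y →
    X.encard + min (⨅ y ∈ {y ∈ Y | y ≠ (0 : A)}, ord y) (Y.encard - 1) ≤ (X + Y).encard := by
  induction n with
  | zero =>
      intro X Y _ _ hYf hYn h0 _ _
      have : Y = ∅ := by
        rw [← Set.ncard_eq_zero hYf]; omega
      exact absurd (this ▸ h0) (Set.notMem_empty 0)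
  | succ n IH =>
      intro X Y hXf hXne hYf hYn h0 hcomm hne
      have hcommY : ∀ a ∈ Y, ∀ b ∈ Y, a + b = b + a := fun a ha b hb =>
        hcomm a (AddSubsemigroup.subset_closure ha) b (AddSubsemigroup.subset_closure hb)
      by_cases hcl : ∀ y ∈ Y, X + Y + ({y} : Set A) ⊆ X + Y
      · obtain ⟨h1, h2, _⟩ := my_sat hXne (hXf.add hYf) h0 hcomm hcl
        exact absurd (h1.trans (by rw [h2])) hne
      · push_neg at hcl
        obtain ⟨ys, hysY, hns⟩ := hcl
        obtain ⟨z, hz1, hz2⟩ := Set.not_subset.1 hns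
        -- the transform
        set Yt : Set A := {y ∈ Y | z ∈ X + Y + ({y} : Set A)} with hYt_def
        set Yz : Set A := Y \ Yt with hYz_def
        have hysYt : ys ∈ Yt := ⟨hysY, hz1⟩
        have h0z : (0 : A) ∈ Yz := by
          refine ⟨h0, fun hmem => hz2 ?_⟩
          have he : X + Y + ({(0 : A)} : Set A) = X + Y := by
            simp [Set.add_singleton]
          have h2 := hmem.2
          rwa [he] at h2
        have hYzY : Yz ⊆ Y := Set.diff_subset
        have hYtY : Yt ⊆ Y := Set.sep_subset _ _
        have hYzf : Yz.Finite := hYf.subset hYzY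
        have hYtf : Yt.Finite := hYf.subset hYtY
        -- C = z - Yt
        set C : Set A := {w : A | ∃ u ∈ Yt, w + u = z} with hC_def
        have hCsub : C ⊆ X + Y := by
          rintro w ⟨u, huYt, hwu⟩
          obtain ⟨p, hp, q, hq, hpq⟩ := Set.mem_add.1 huYt.2
          obtain rfl : q = u := hq
          exact add_right_cancel (hwu.trans hpq.symm) ▸ hp
        have hdisj : Disjoint (X + Yz) C := by
          rw [Set.disjoint_left]
          rintro w hw ⟨u, huYt, hwu⟩
          obtain ⟨x, hx, t, ht, hxt⟩ := Set.mem_add.1 hw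
          have hzeq : z = (x + u) + t := by
            rw [← hwu, ← hxt, add_assoc, hcommY t (hYzY ht) u (hYtY huYt), ← add_assoc]
          have hmem : z ∈ X + Y + ({t} : Set A) := by
            rw [hzeq]
            exact Set.add_mem_add (Set.add_mem_add hx (hYtY huYt)) rfl
          exact ht.2 ⟨hYzY ht, hmem⟩
        have hYtC : Yt.encard ≤ C.encard := by
          have hex : ∀ u ∈ Yt, ∃ w, w + u = z := by
            intro u hu
            obtain ⟨p, hp, q, hq, hpq⟩ := Set.mem_add.1 hu.2
            obtain rfl : q = u := hq
            exact ⟨p, hpq⟩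
          choose! f hf using hex
          have hinj : Set.InjOn f Yt := by
            intro u hu u' hu' heq
            have : f u + u = f u + u' := by rw [hf u hu, heq, hf u' hu']
            exact add_left_cancel this
          have hmaps : f '' Yt ⊆ C := by
            rintro _ ⟨u, hu, rfl⟩
            exact ⟨u, hu, hf u hu⟩
          calc Yt.encard = (f '' Yt).encard := (hinj.encard_image).symm
            _ ≤ C.encard := Set.encard_le_encard hmaps
        have hcount : (X + Yz).encard + Yt.encard ≤ (X + Y).encard := by
          have hsub : (X + Yz) ∪ C ⊆ X + Y :=
            Set.union_subset (Set.add_subset_add_left hYzY) hCsub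
          calc (X + Yz).encard + Yt.encard ≤ (X + Yz).encard + C.encard :=
                add_le_add_right hYtC _
            _ = ((X + Yz) ∪ C).encard := (Set.encard_union_eq hdisj).symm
            _ ≤ (X + Y).encard := Set.encard_le_encard hsub
        have hsplit : Yz.encard + Yt.encard = Y.encard :=
          Set.encard_diff_add_encard_of_subset hYtY
        have hYzne : Yz.Nonempty := ⟨0, h0z⟩
        have h1Yz : 1 ≤ Yz.encard := Set.one_le_encard_iff_nonempty.2 hYzne
        have hminle : ∀ m : ℕ∞, min (⨅ y ∈ {y ∈ Y | y ≠ (0 : A)}, ord y) (Y.encard - 1) ≤ m →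
            X.encard + m ≤ (X + Y).encard → True := fun _ _ _ => trivial
        by_cases hYz1 : Yz = {0}
        · -- Yt = Y \ {0} : direct count
          have hXz : X + Yz = X := by rw [hYz1]; simp [Set.add_singleton]
          have hY1 : Y.encard - 1 ≤ Yt.encard := by
            rw [tsub_le_iff_left, ← hsplit, hYz1, Set.encard_singleton]
          calc X.encard + min (⨅ y ∈ {y ∈ Y | y ≠ (0 : A)}, ord y) (Y.encard - 1)
              ≤ X.encard + Yt.encard := add_le_add_right ((min_le_right _ _).trans hY1) _
            _ = (X + Yz).encard + Yt.encard := by rw [hXz]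
            _ ≤ (X + Y).encard := hcount
        · -- there is y₁ ∈ Yz, y₁ ≠ 0
          have hy₁ : ∃ y₁ ∈ Yz, y₁ ≠ (0 : A) := by
            by_contra hcon
            push_neg at hcon
            exact hYz1 (Set.eq_singleton_iff_unique_mem.2 ⟨h0z, fun w hw => hcon w hw⟩)
          obtain ⟨y₁, hy₁Yz, hy₁0⟩ := hy₁
          have hkle : (⨅ y ∈ {y ∈ Y | y ≠ (0 : A)}, ord y) ≤ ord y₁ :=
            iInf₂_le y₁ ⟨hYzY hy₁Yz, hy₁0⟩
          have hcommYz : CommOn (closure Yz : Set A) := by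
            intro a ha b hb
            have hmono := SetLike.coe_subset_coe.mpr (AddSubsemigroup.closure_mono hYzY)
            exact hcomm a (hmono ha) b (hmono hb)
          by_cases hrec : X + Yz = X + dclosure Yz
          · -- saturated case: coset argument
            set G : Set A := (closure Yz : Set A) with hG_def
            have hXG : X + Yz = X + G := by
              apply (Set.add_subset_add_left AddSubsemigroup.subset_closure).antisymm
              rw [hrec]
              exact Set.add_subset_add_left
                (SetLike.coe_subset_coe.mpr (AddSubsemigroup.closure_mono Set.subset_union_left))
            obtain ⟨x₀, hx₀⟩ := hXne
            have hGfin : G.Finite := by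
              apply Set.Finite.of_finite_image (f := fun s => x₀ + s) ?_
                ((add_right_injective x₀).injOn)
              apply ((hXf.add hYf).subset (Set.add_subset_add_left hYzY)).subset
              rintro _ ⟨s, hs, rfl⟩
              rw [hXG]
              exact Set.add_mem_add hx₀ hs
            have h0G : (0 : A) ∈ G := AddSubsemigroup.subset_closure h0z
            have hGY : G ⊆ (closure Y : Set A) :=
              SetLike.coe_subset_coe.mpr (AddSubsemigroup.closure_mono hYzY)
            -- H = cyclic group generated by y₁
            set H : Set A := (closure {y₁} : Set A) with hH_def
            have hHG : H ⊆ G := SetLike.coe_subset_coe.mpr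
              (AddSubsemigroup.closure_mono (Set.singleton_subset_iff.2 hy₁Yz))
            have hHfin : H.Finite := hGfin.subset hHG
            have hHcl : ∀ a ∈ H, ∀ b ∈ H, a + b ∈ H := fun a ha b hb => add_mem ha hb
            have hHinv : ∀ h ∈ H, ∃ h' ∈ H, h + h' = 0 := by
              intro h hh
              obtain ⟨_, h', hh', hinv⟩ := my_grp hHfin hHcl hh
              refine ⟨h', hh', ?_⟩
              have hcommH : h + h' = h' + h := by
                have h1 : h ∈ (closure Y : Set A) := hGY (hHG hh)
                have h2 : h' ∈ (closure Y : Set A) := hGY (hHG hh')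
                exact hcomm h h1 h' h2
              rw [hcommH]; exact hinv
            -- v : the witness
            obtain ⟨v, hv, q, hq, hvq⟩ := Set.mem_add.1 hz1
            have hq' : q = ys := hq
            rw [hq'] at hvq
            have hvC : v ∈ C := ⟨ys, hysYt, hvq⟩
            have hvnXG : v ∉ X + G := by
              rw [← hXG]
              exact fun hmem => (Set.disjoint_left.1 hdisj hmem) hvC
            obtain ⟨x, hx, u₀, hu₀, hxu₀⟩ := Set.mem_add.1 hv
            -- D = {h ∈ H | x + h ∈ X}
            set D : Set A := {h ∈ H | x + h ∈ X} with hD_def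
            have hDH : D ⊆ H := Set.sep_subset _ _
            have m1 : (H \ D).encard ≤ ((X + G) \ X).encard := by
              have hmaps : (fun h => x + h) '' (H \ D) ⊆ (X + G) \ X := by
                rintro _ ⟨h, ⟨hhH, hhD⟩, rfl⟩
                show x + h ∈ (X + G) \ X
                exact ⟨Set.add_mem_add hx (hHG hhH), fun hmem => hhD ⟨hhH, hmem⟩⟩
              calc (H \ D).encard = ((fun h => x + h) '' (H \ D)).encard :=
                    ((add_right_injective x).injOn.encard_image).symm
                _ ≤ ((X + G) \ X).encard := Set.encard_le_encard hmaps
            have m2 : D.encard ≤ ((X + Y) \ (X + G)).encard := by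
              have hmaps : (fun h => v + h) '' D ⊆ (X + Y) \ (X + G) := by
                rintro _ ⟨h, ⟨hhH, hhX⟩, rfl⟩
                show v + h ∈ (X + Y) \ (X + G)
                constructor
                · have hcommu : u₀ + h = h + u₀ :=
                    hcomm u₀ (AddSubsemigroup.subset_closure hu₀) h (hGY (hHG hhH))
                  have : v + h = (x + h) + u₀ := by
                    rw [← hxu₀, add_assoc, hcommu, ← add_assoc]
                  rw [this]
                  exact Set.add_mem_add hhX hu₀
                · intro hmem
                  obtain ⟨h', hh'H, hinv⟩ := hHinv h hhH
                  apply hvnXG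
                  obtain ⟨x', hx', g, hg, hxg⟩ := Set.mem_add.1 hmem
                  have : v = x' + (g + h') := by
                    rw [← add_assoc, hxg, add_assoc, hinv, add_zero]
                  rw [this]
                  exact Set.add_mem_add hx' (add_mem ((SetLike.mem_coe).1 hg) ((SetLike.mem_coe).1 (hHG hh'H)))
                  -- g + h' ∈ G since G closed
              calc D.encard = ((fun h => v + h) '' D).encard :=
                    ((add_right_injective v).injOn.encard_image).symm
                _ ≤ ((X + Y) \ (X + G)).encard := Set.encard_le_encard hmaps
            have hXsubXG : X ⊆ X + G := by
              intro t ht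
              have := Set.add_mem_add ht h0G
              rwa [add_zero] at this
            have hXGsubXY : X + G ⊆ X + Y := by
              rw [← hXG]; exact Set.add_subset_add_left hYzY
            have e1 : ((X + G) \ X).encard + X.encard = (X + G).encard :=
              Set.encard_diff_add_encard_of_subset hXsubXG
            have e2 : ((X + Y) \ (X + G)).encard + (X + G).encard = (X + Y).encard :=
              Set.encard_diff_add_encard_of_subset hXGsubXY
            have e3 : (H \ D).encard + D.encard = H.encard :=
              Set.encard_diff_add_encard_of_subset hDH
            have hordH : ord y₁ = H.encard := rfl
            calc X.encard + min (⨅ y ∈ {y ∈ Y | y ≠ (0 : A)}, ord y) (Y.encard - 1)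
                ≤ X.encard + ord y₁ := add_le_add_right ((min_le_left _ _).trans hkle) _
              _ = X.encard + ((H \ D).encard + D.encard) := by rw [hordH, e3]
              _ ≤ X.encard + (((X + G) \ X).encard + ((X + Y) \ (X + G)).encard) := by
                  exact add_le_add_right (add_le_add m1 m2) _
              _ = (((X + G) \ X).encard + X.encard) + ((X + Y) \ (X + G)).encard := by
                  ring
              _ = (X + G).encard + ((X + Y) \ (X + G)).encard := by rw [e1]
              _ = (X + Y).encard := by rw [add_comm, e2]
          · -- recursive case
            have hYzlt : Yz.ncard ≤ n := by
              have hss : Yz ⊂ Y := by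
                refine Set.ssubset_iff_of_subset hYzY |>.2 ⟨ys, hysY, fun hmem => hmem.2 hysYt⟩
              have := Set.ncard_lt_ncard hss hYf
              omega
            have hIH := IH X Yz hXf hXne hYzf hYzlt h0z hcommYz hrec
            have hklez : (⨅ y ∈ {y ∈ Y | y ≠ (0 : A)}, ord y) ≤
                ⨅ y ∈ {y ∈ Yz | y ≠ (0 : A)}, ord y := by
              refine le_iInf₂ fun y hy => iInf₂_le y ⟨hYzY hy.1, hy.2⟩
            have harith : min (⨅ y ∈ {y ∈ Y | y ≠ (0 : A)}, ord y) (Y.encard - 1) ≤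
                min (⨅ y ∈ {y ∈ Yz | y ≠ (0 : A)}, ord y) (Yz.encard - 1) + Yt.encard := by
              rcases le_total (⨅ y ∈ {y ∈ Yz | y ≠ (0 : A)}, ord y) (Yz.encard - 1) with hle | hle
              · rw [min_eq_left hle]
                exact (min_le_left _ _).trans (hklez.trans le_self_add)
              · rw [min_eq_right hle]
                refine (min_le_right _ _).trans ?_
                rw [tsub_le_iff_left, ← hsplit, ← add_assoc, add_comm (1 : ℕ∞),
                  tsub_add_cancel_of_le h1Yz]
            calc X.encard + min (⨅ y ∈ {y ∈ Y | y ≠ (0 : A)}, ord y) (Y.encard - 1)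
                ≤ X.encard + (min (⨅ y ∈ {y ∈ Yz | y ≠ (0 : A)}, ord y) (Yz.encard - 1)
                    + Yt.encard) := add_le_add_right harith _
              _ = (X.encard + min (⨅ y ∈ {y ∈ Yz | y ≠ (0 : A)}, ord y) (Yz.encard - 1))
                    + Yt.encard := by rw [add_assoc]
              _ ≤ (X + Yz).encard + Yt.encard := add_le_add_left hIH _
              _ ≤ (X + Y).encard := hcount

end Core

section Translate

variable {A : Type*} [AddMonoid A] [IsCancelAdd A]

lemma my_translate (X Y : Set A) (hXf : X.Finite) (hXne : X.Nonempty) (hYf : Y.Finite)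
    (h0 : (0 : A) ∈ Y) (hcomm : CommOn (closure Y : Set A))
    (hne : X + Y ≠ X + dclosure Y) (y₀ : A) (hy₀Y : y₀ ∈ Y) (hy₀u : IsUnitElem y₀) :
    X.encard + min (⨅ y ∈ {y ∈ Y | y ≠ y₀}, ord (y + neg y₀)) (Y.encard - 1) ≤
      (X + Y).encard := by
  have hcommY : ∀ a ∈ Y, ∀ b ∈ Y, a + b = b + a := fun a ha b hb =>
    hcomm a (AddSubsemigroup.subset_closure ha) b (AddSubsemigroup.subset_closure hb)
  set c : A := neg y₀ with hc_def
  obtain ⟨hc1, hc2⟩ := my_neg_spec hy₀u   -- y₀ + c = 0, c + y₀ = 0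
  have hcu : IsUnitElem c := my_unit_iff.2 ⟨y₀, hc2, hc1⟩
  have hnegc : neg c = y₀ := my_neg_eq hcu hc2 hc1
  have hcm : ∀ a ∈ Y, a + c = c + a := by
    intro a ha
    have e1 : y₀ + (c + a) = a := by rw [← add_assoc, hc1, zero_add]
    have e2 : y₀ + (a + c) = a := by
      rw [← add_assoc, hcommY y₀ hy₀Y a ha, add_assoc, hc1, add_zero]
    exact (add_left_cancel (e2.trans e1.symm) : a + c = c + a)
  set X' : Set A := X + ({y₀} : Set A) with hX'_def
  set Y' : Set A := Y + ({c} : Set A) with hY'_def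
  have hY'img : Y' = (fun y => y + c) '' Y := Set.add_singleton
  have hX'img : X' = (fun x => x + y₀) '' X := Set.add_singleton
  have hkey : ∀ x y : A, y ∈ Y → (x + y₀) + (y + c) = x + y := by
    intro x y hy
    calc (x + y₀) + (y + c) = x + ((y₀ + y) + c) := by simp [add_assoc]
      _ = x + ((y + y₀) + c) := by rw [hcommY y₀ hy₀Y y hy]
      _ = x + (y + (y₀ + c)) := by rw [add_assoc]
      _ = x + y := by rw [hc1, add_zero]
  have hXY' : X' + Y' = X + Y := by
    apply subset_antisymm
    · rintro _ ⟨p, hp, q, hq, rfl⟩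
      rw [hX'img] at hp; rw [hY'img] at hq
      obtain ⟨x, hx, rfl⟩ := hp
      obtain ⟨y, hy, rfl⟩ := hq
      show (x + y₀) + (y + c) ∈ X + Y
      rw [hkey x y hy]
      exact Set.add_mem_add hx hy
    · rintro _ ⟨x, hx, y, hy, rfl⟩
      show x + y ∈ X' + Y'
      rw [← hkey x y hy]
      exact Set.add_mem_add (Set.add_mem_add hx rfl) (Set.add_mem_add hy rfl)
  have h0' : (0 : A) ∈ Y' := by
    rw [hY'img]
    exact ⟨y₀, hy₀Y, hc1⟩
  have hY'f : Y'.Finite := by rw [hY'img]; exact hYf.image _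
  have hX'f : X'.Finite := by rw [hX'img]; exact hXf.image _
  have hX'ne : X'.Nonempty := by
    rw [hX'img]; exact hXne.image _
  have hX'enc : X'.encard = X.encard := by
    rw [hX'img]; exact (add_left_injective y₀).injOn.encard_image
  have hY'enc : Y'.encard = Y.encard := by
    rw [hY'img]; exact (add_left_injective c).injOn.encard_image
  -- commutativity of closure Y'
  have hcomm' : CommOn (closure Y' : Set A) := by
    apply my_commOn_closure
    rw [hY'img]
    rintro _ ⟨a, ha, rfl⟩ _ ⟨b, hb, rfl⟩
    show (a + c) + (b + c) = (b + c) + (a + c)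
    have e : ∀ s t : A, s ∈ Y → t ∈ Y → (s + c) + (t + c) = ((s + t) + c) + c := by
      intro s t hs ht
      calc (s + c) + (t + c) = s + ((c + t) + c) := by simp [add_assoc]
        _ = s + ((t + c) + c) := by rw [← hcm t ht]
        _ = ((s + t) + c) + c := by simp [add_assoc]
    rw [e a b ha hb, e b a hb ha, hcommY a ha b hb]
  -- dclosure identification
  set M : Set A := dclosure Y with hM_def
  set M' : Set A := dclosure Y' with hM'_def
  have hMcl : ∀ a ∈ M, ∀ b ∈ M, a + b ∈ M := fun a ha b hb => add_mem ha hb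
  have hM'cl : ∀ a ∈ M', ∀ b ∈ M', a + b ∈ M' := fun a ha b hb => add_mem ha hb
  have hYM : Y ⊆ M := fun y hy => AddSubsemigroup.subset_closure (Set.mem_union_left _ hy)
  have hnegM : ∀ u ∈ unitsIn Y, neg u ∈ M := fun u hu =>
    AddSubsemigroup.subset_closure (Set.mem_union_right _ ⟨u, hu, rfl⟩)
  have hcM : c ∈ M := hnegM y₀ ⟨hy₀Y, hy₀u⟩
  have hY'M' : Y' ⊆ M' := fun y hy => AddSubsemigroup.subset_closure (Set.mem_union_left _ hy)
  have hnegM' : ∀ u ∈ unitsIn Y', neg u ∈ M' := fun u hu =>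
    AddSubsemigroup.subset_closure (Set.mem_union_right _ ⟨u, hu, rfl⟩)
  have hcY' : c ∈ Y' := by
    rw [hY'img]; exact ⟨0, h0, zero_add c⟩
  have hy₀M' : y₀ ∈ M' := hnegc ▸ hnegM' c ⟨hcY', hcu⟩
  -- M' ⊆ M
  have hM'M : M' ⊆ M := by
    refine SetLike.coe_subset_coe.mpr (AddSubsemigroup.closure_le.2 (Set.union_subset ?_ ?_))
    · intro y' hy'
      rw [hY'img] at hy'
      obtain ⟨y, hy, rfl⟩ := hy'
      show y + c ∈ M
      exact hMcl y (hYM hy) c hcM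
    · rintro _ ⟨u', hu', rfl⟩
      -- u' = y + c with y ∈ Y a unit; neg u' = y₀ + neg y ∈ M
      have hu'Y' := hu'.1
      rw [hY'img] at hu'Y'
      obtain ⟨y, hy, rfl⟩ := hu'Y'
      show neg (y + c) ∈ M
      have hyu : IsUnitElem y := by
        have h1 : (y + c) + y₀ = y := by
          rw [add_assoc, hc2, add_zero]
        exact h1 ▸ my_unit_add hu'.2 hy₀u
      obtain ⟨hy1, hy2⟩ := my_neg_spec hyu
      have hng : neg (y + c) = y₀ + neg y := by
        apply my_neg_eq hu'.2
        · rw [add_assoc y c (y₀ + neg y), ← add_assoc c y₀ (neg y), hc2, zero_add, hy1]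
        · rw [add_assoc y₀ (neg y) (y + c), ← add_assoc (neg y) y c, hy2, zero_add, hc1]
      rw [hng]
      exact hMcl y₀ (hYM hy₀Y) (neg y) (hnegM y ⟨hy, hyu⟩)
  -- M ⊆ M'
  have hMM' : M ⊆ M' := by
    refine SetLike.coe_subset_coe.mpr (AddSubsemigroup.closure_le.2 (Set.union_subset ?_ ?_))
    · intro y hy
      have h1 : y = y₀ + (y + c) := by
        rw [← add_assoc, hcommY y₀ hy₀Y y hy, add_assoc, hc1, add_zero]
      rw [h1]
      exact hM'cl y₀ hy₀M' (y + c) (hY'M' (hY'img ▸ ⟨y, hy, rfl⟩))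
    · rintro _ ⟨u, hu, rfl⟩
      have huY := hu.1
      have huu := hu.2
      obtain ⟨hu1, hu2⟩ := my_neg_spec huu
      have hucY' : u + c ∈ Y' := hY'img ▸ ⟨u, huY, rfl⟩
      have hucu : IsUnitElem (u + c) := my_unit_add huu hcu
      have hng : neg (u + c) = y₀ + neg u := by
        apply my_neg_eq hucu
        · rw [add_assoc u c (y₀ + neg u), ← add_assoc c y₀ (neg u), hc2, zero_add, hu1]
        · rw [add_assoc y₀ (neg u) (u + c), ← add_assoc (neg u) u c, hu2, zero_add, hc1]
      have h1 : neg u = c + neg (u + c) := by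
        rw [hng, ← add_assoc, hc2, zero_add]
      rw [h1]
      exact hM'cl c (hY'M' hcY') (neg (u + c)) (hnegM' (u + c) ⟨hucY', hucu⟩)
  have hMeq : M' = M := hM'M.antisymm hMM'
  -- X' + M' = X + M
  have hXM : X' + M' = X + M := by
    rw [hMeq]
    apply subset_antisymm
    · rintro _ ⟨p, hp, m, hm, rfl⟩
      rw [hX'img] at hp
      obtain ⟨x, hx, rfl⟩ := hp
      show (x + y₀) + m ∈ X + M
      rw [add_assoc]
      exact Set.add_mem_add hx (hMcl y₀ (hYM hy₀Y) m hm)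
    · rintro _ ⟨x, hx, m, hm, rfl⟩
      show x + m ∈ X' + M
      have h1 : x + m = (x + y₀) + (c + m) := by
        rw [add_assoc, ← add_assoc y₀ c m, hc1, zero_add]
      rw [h1]
      exact Set.add_mem_add (Set.add_mem_add hx rfl) (hMcl c hcM m hm)
  have hne' : X' + Y' ≠ X' + dclosure Y' := by
    rw [hXY']
    rw [show X' + dclosure Y' = X + dclosure Y from hXM]
    exact hne
  -- apply the core lemma
  have hcore := my_core Y'.ncard X' Y' hX'f hX'ne hY'f le_rfl h0' hcomm' hne'
  rw [hXY', hX'enc, hY'enc] at hcore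
  -- identify the infimum
  have hsets : {y ∈ Y' | y ≠ (0 : A)} = (fun y => y + c) '' {y ∈ Y | y ≠ y₀} := by
    apply subset_antisymm
    · rintro w ⟨hwY', hw0⟩
      rw [hY'img] at hwY'
      obtain ⟨y, hy, rfl⟩ := hwY'
      refine ⟨y, ⟨hy, fun hyy => hw0 ?_⟩, rfl⟩
      show y + c = 0
      rw [hyy]; exact hc1
    · rintro _ ⟨y, ⟨hy, hyy⟩, rfl⟩
      refine ⟨hY'img ▸ ⟨y, hy, rfl⟩, fun h0eq => hyy ?_⟩
      have h0eq' : y + c = 0 := h0eq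
      have heq : y + c = y₀ + c := by rw [h0eq']; exact hc1.symm
      exact add_right_cancel heq
  have hinf : (⨅ y ∈ {y ∈ Y' | y ≠ (0 : A)}, ord y) =
      ⨅ y ∈ {y ∈ Y | y ≠ y₀}, ord (y + c) := by
    rw [hsets, iInf_image]
  rw [hinf] at hcore
  exact hcore

end Translate

theorem stmt14 {A : Type*} [AddMonoid A] [IsCancelAdd A] (X Y : Set A)
    (hcomm : CommOn (AddSubsemigroup.closure Y : Set A))
    (hne : X ∪ (X + Y) ≠ X + dclosure Y) :
    X.encard + min (gamma (Y ∪ {0})) (Y.encard - (if (0 : A) ∈ Y then 1 else 0)) ≤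
      (X ∪ (X + Y)).encard := by
  classical
  have hcommY : ∀ a ∈ Y, ∀ b ∈ Y, a + b = b + a := fun a ha b hb =>
    hcomm a (AddSubsemigroup.subset_closure ha) b (AddSubsemigroup.subset_closure hb)
  rcases X.eq_empty_or_nonempty with rfl | hXne
  · exact absurd (by simp) hne
  by_cases hXf : X.Finite
  swap
  · have hinf : (X ∪ (X + Y)).Infinite := Set.Infinite.mono Set.subset_union_left hXf
    rw [hinf.encard_eq]
    exact le_top
  by_cases hY0 : Y ⊆ {0}
  · have hz : Y.encard - (if (0 : A) ∈ Y then 1 else 0) = 0 := by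
      rcases Set.subset_singleton_iff_eq.1 hY0 with rfl | rfl
      · simp
      · simp
    calc X.encard + min (gamma (Y ∪ {0})) (Y.encard - (if (0 : A) ∈ Y then 1 else 0))
        ≤ X.encard + 0 := add_le_add_right ((min_le_right _ _).trans hz.le) _
      _ = X.encard := add_zero _
      _ ≤ (X ∪ (X + Y)).encard := Set.encard_le_encard Set.subset_union_left
  obtain ⟨y₂, hy₂Y, hy₂0⟩ : ∃ y ∈ Y, y ≠ 0 := by
    obtain ⟨y, hy, hy0⟩ := Set.not_subset.1 hY0
    exact ⟨y, hy, fun h => hy0 (by simp [h])⟩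
  by_cases hYf : Y.Finite
  swap
  · obtain ⟨x₀, hx₀⟩ := hXne
    have hinj : Set.InjOn (fun y => x₀ + y) Y := (add_right_injective x₀).injOn
    have h1 : ((fun y => x₀ + y) '' Y).Infinite := Set.Infinite.image hinj hYf
    have h2 : (fun y => x₀ + y) '' Y ⊆ X ∪ (X + Y) := by
      rintro _ ⟨y, hy, rfl⟩
      exact Set.mem_union_right _ (Set.add_mem_add hx₀ hy)
    rw [(h1.mono h2).encard_eq]
    exact le_top
  set Y₀ : Set A := Y ∪ {(0 : A)} with hY₀_def
  have h0Y₀ : (0 : A) ∈ Y₀ := Set.mem_union_right _ rfl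
  have hY₀f : Y₀.Finite := hYf.union (Set.finite_singleton 0)
  have hy₂Y₀ : y₂ ∈ Y₀ := Set.mem_union_left _ hy₂Y
  have hCommY₀ : CommOn Y₀ := by
    rintro a (ha | ha) b (hb | hb)
    · exact hcommY a ha b hb
    · obtain rfl : b = 0 := hb; rw [add_zero, zero_add]
    · obtain rfl : a = 0 := ha; rw [add_zero, zero_add]
    · obtain rfl : a = 0 := ha; obtain rfl : b = 0 := hb; rfl
  have hcomm₀ : CommOn (closure Y₀ : Set A) := my_commOn_closure hCommY₀
  have hadd0 : X + ({(0 : A)} : Set A) = X := by simp [Set.add_singleton]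
  have hU : X ∪ (X + Y) = X + Y₀ := by
    rw [hY₀_def, Set.add_union, hadd0, Set.union_comm]
  have hXY₀f : (X + Y₀).Finite := hXf.add hY₀f
  have hne₀ : X + Y₀ ≠ X + dclosure Y₀ := by
    intro hsat0
    have hcl : ∀ y ∈ Y₀, X + Y₀ + ({y} : Set A) ⊆ X + Y₀ := by
      intro y hy
      rw [hsat0]
      rintro _ ⟨p, hp, q, hq, rfl⟩
      have hq' : q = y := hq
      obtain ⟨x, hx, d, hd, rfl⟩ := hp
      show (x + d) + q ∈ X + dclosure Y₀
      rw [hq', add_assoc]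
      exact Set.add_mem_add hx
        (add_mem hd (AddSubsemigroup.subset_closure (Set.mem_union_left _ hy)))
    obtain ⟨h1, h2, h3fin⟩ := my_sat hXne hXY₀f h0Y₀ hcomm₀ hcl
    have hYsub : (closure Y : Set A) ⊆ (closure Y₀ : Set A) :=
      SetLike.coe_subset_coe.mpr (AddSubsemigroup.closure_mono Set.subset_union_left)
    have hYfin' : (closure Y : Set A).Finite := h3fin.subset hYsub
    have hYcl : ∀ a ∈ (closure Y : Set A), ∀ b ∈ (closure Y : Set A),
        a + b ∈ (closure Y : Set A) := fun a ha b hb => add_mem ha hb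
    obtain ⟨h0Y, -⟩ := my_grp hYfin' hYcl (AddSubsemigroup.subset_closure hy₂Y)
    have hYY₀ : (closure Y₀ : Set A) = (closure Y : Set A) := by
      apply subset_antisymm
      · exact SetLike.coe_subset_coe.mpr (AddSubsemigroup.closure_le.2
          (Set.union_subset AddSubsemigroup.subset_closure (Set.singleton_subset_iff.2 h0Y)))
      · exact hYsub
    have hdclY : dclosure Y = (closure Y : Set A) := by
      apply subset_antisymm
      · refine SetLike.coe_subset_coe.mpr (AddSubsemigroup.closure_le.2
          (Set.union_subset AddSubsemigroup.subset_closure ?_))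
        rintro _ ⟨u, hu, rfl⟩
        obtain ⟨-, b, hbY, hba⟩ := my_grp hYfin' hYcl (AddSubsemigroup.subset_closure hu.1)
        have hab : u + b = 0 := by
          rw [hcomm u (AddSubsemigroup.subset_closure hu.1) b hbY]; exact hba
        rw [my_neg_eq hu.2 hab hba]
        exact hbY
      · exact SetLike.coe_subset_coe.mpr (AddSubsemigroup.closure_mono Set.subset_union_left)
    apply hne
    rw [hU, h1, hYY₀, ← hdclY]
  have hsec : Y.encard - (if (0 : A) ∈ Y then 1 else 0) = Y₀.encard - 1 := by
    by_cases h0Y : (0 : A) ∈ Y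
    · rw [if_pos h0Y]
      have he : Y₀ = Y := by
        rw [hY₀_def, Set.union_eq_self_of_subset_right (Set.singleton_subset_iff.2 h0Y)]
      rw [he]
    · rw [if_neg h0Y]
      have hdisj : Disjoint Y ({(0 : A)} : Set A) := Set.disjoint_singleton_right.2 h0Y
      have he : Y₀.encard = Y.encard + 1 := by
        rw [hY₀_def, Set.encard_union_eq hdisj, Set.encard_singleton]
      rw [he]
      obtain ⟨k, hk⟩ := hYf.exists_encard_eq_coe
      rw [hk, ← Nat.cast_one, ← Nat.cast_add, ← ENat.coe_sub]
      simp
  have henY₀ : ¬(Y₀.encard ≤ 1) := by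
    intro hle
    have h2 : ({y₂, (0 : A)} : Set A) ⊆ Y₀ := by
      rintro w (rfl | rfl)
      · exact hy₂Y₀
      · exact h0Y₀
    have h3 : (2 : ℕ∞) ≤ Y₀.encard := by
      rw [← Set.encard_pair hy₂0]
      exact Set.encard_le_encard h2
    have := h3.trans hle
    norm_num at this
  have hufin : (unitsIn Y₀).Finite := hY₀f.subset (Set.sep_subset _ _)
  have hune : (unitsIn Y₀).Nonempty := ⟨0, h0Y₀, my_unit_zero⟩
  obtain ⟨a, haU, hamax⟩ := Set.exists_max_image (unitsIn Y₀)
    (fun x₀ => ⨅ x ∈ {x ∈ Y₀ | x ≠ x₀}, ord (x + neg x₀)) hufin hune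
  have hsup : gamma Y₀ ≤ ⨅ x ∈ {x ∈ Y₀ | x ≠ a}, ord (x + neg a) := by
    rw [gamma, if_neg henY₀]
    exact iSup₂_le fun b hb => hamax b hb
  have htrans := my_translate X Y₀ hXf hXne hY₀f h0Y₀ hcomm₀ hne₀ a haU.1 haU.2
  rw [hU, hsec]
  calc X.encard + min (gamma Y₀) (Y₀.encard - 1)
      ≤ X.encard + min (⨅ x ∈ {x ∈ Y₀ | x ≠ a}, ord (x + neg a)) (Y₀.encard - 1) :=
        add_le_add_right (min_le_min hsup le_rfl) _
    _ ≤ (X + Y₀).encard := htrans
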